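/- Let k ≥ 1 be an integer and n > 1 a real number. Define z(t) = n·(1 + (k+1)t)^{−1/(k+1)} and x(t) = n·exp(1 − (1 + (k+1)t)^{1/(k+1)}) for t ≥ 0. Then x(0) = n and x is differentiable with x'(t) = −x(t)·(z(t)/n)^k for all t ≥ 0. Moreover, for every ε > 0, x(t) ≤ n^{1−ε} for all t ≥ (1 + ε·ln n)^{k+1}/(k+1); in particular, the X-count drops below n^{1−ε} within O((ln n)^{k+1}) time. -/

import Mathlib

/-- The mean-field trajectory of the `(k+1)`-st order elimination dynamics:
`z(t) = n·(1 + (k+1)t)^(-1/(k+1))`. -/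
noncomputable def meanFieldZ (k : ℕ) (n t : ℝ) : ℝ :=
  n * (1 + ((k : ℝ) + 1) * t) ^ (-(1 : ℝ) / ((k : ℝ) + 1))

/-- The mean-field trajectory of the control-state count in the fast junta-creation
protocol: `x(t) = n·exp(1 - (1 + (k+1)t)^(1/(k+1)))`. -/
noncomputable def meanFieldXJunta (k : ℕ) (n t : ℝ) : ℝ :=
  n * Real.exp (1 - (1 + ((k : ℝ) + 1) * t) ^ ((1 : ℝ) / ((k : ℝ) + 1)))

/-- Let `k ≥ 1`, `n > 1`, `z(t) = n·(1+(k+1)t)^(-1/(k+1))` and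
`x(t) = n·exp(1 - (1+(k+1)t)^(1/(k+1)))`. Then `x(0) = n`, `x` is differentiable with
`x'(t) = -x(t)·(z(t)/n)^k` for all `t ≥ 0`, and for every `ε > 0` we have `x(t) ≤ n^(1-ε)`
for all `t ≥ (1 + ε·ln n)^(k+1)/(k+1)`. -/
theorem stmt13 (k : ℕ) (hk : 1 ≤ k) (n : ℝ) (hn : 1 < n) :
    meanFieldXJunta k n 0 = n ∧
    (∀ t : ℝ, 0 ≤ t →
      HasDerivAt (meanFieldXJunta k n)
        (-(meanFieldXJunta k n t) * (meanFieldZ k n t / n) ^ k) t) ∧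
    (∀ ε : ℝ, 0 < ε → ∀ t : ℝ,
      (1 + ε * Real.log n) ^ (k + 1) / ((k : ℝ) + 1) ≤ t →
      meanFieldXJunta k n t ≤ n ^ ((1 : ℝ) - ε)) := by
  have hc : (0:ℝ) < (k:ℝ) + 1 := by positivity
  have hn0 : (0:ℝ) < n := by linarith
  refine ⟨?_, ?_, ?_⟩
  · simp [meanFieldXJunta]
  · intro t ht
    set c : ℝ := (k:ℝ) + 1 with hcdef
    have hu : (0:ℝ) < 1 + c * t := by nlinarith
    have h1 : HasDerivAt (fun s : ℝ => 1 + c * s) c t := by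
      simpa using ((hasDerivAt_id t).const_mul c).const_add 1
    have h2 : HasDerivAt (fun s : ℝ => (1 + c * s) ^ ((1:ℝ)/c))
        (((1:ℝ)/c) * (1 + c * t) ^ ((1:ℝ)/c - 1) * c) t :=
      by have := (Real.hasDerivAt_rpow_const (x := 1 + c * t) (p := (1:ℝ)/c) (Or.inl hu.ne')).comp t h1; exact this
    have h3 : HasDerivAt (fun s : ℝ => 1 - (1 + c * s) ^ ((1:ℝ)/c))
        (-(((1:ℝ)/c) * (1 + c * t) ^ ((1:ℝ)/c - 1) * c)) t := h2.const_sub 1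
    have h4 := (h3.exp).const_mul n
    have key : n * (Real.exp (1 - (1 + c * t) ^ ((1:ℝ)/c)) *
        (-(((1:ℝ)/c) * (1 + c * t) ^ ((1:ℝ)/c - 1) * c)))
        = -(meanFieldXJunta k n t) * (meanFieldZ k n t / n) ^ k := by
      have hz : meanFieldZ k n t / n = (1 + c * t) ^ (-(1:ℝ)/c) := by
        rw [meanFieldZ, mul_comm, mul_div_assoc, div_self hn0.ne', mul_one]
      rw [hz, meanFieldXJunta,
        ← Real.rpow_natCast ((1 + c * t) ^ (-(1:ℝ)/c)) k,
        ← Real.rpow_mul hu.le]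
      have hexp : (1:ℝ)/c - 1 = -(1:ℝ)/c * (k:ℝ) := by
        field_simp [hcdef]
        linarith [hcdef]
      rw [← hexp]
      field_simp
      simp only [hcdef]
      ring
    rw [← key]
    exact h4
  · intro ε hε t hT
    have hln : 0 < Real.log n := Real.log_pos hn
    set c : ℝ := (k:ℝ) + 1 with hcdef
    set a : ℝ := 1 + ε * Real.log n with hadef
    have ha : (0:ℝ) < a := by nlinarith
    have ht0 : (0:ℝ) ≤ t := le_trans (by positivity) hT
    have hu : (0:ℝ) < 1 + c * t := by nlinarith
    have h1 : a ^ (k+1) ≤ 1 + c * t := by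
      have := (div_le_iff₀ hc).mp hT
      nlinarith
    have h2 : a ≤ (1 + c * t) ^ ((1:ℝ)/c) := by
      have h3 : ((a ^ (k+1) : ℝ)) ^ ((1:ℝ)/c) ≤ (1 + c * t) ^ ((1:ℝ)/c) :=
        Real.rpow_le_rpow (by positivity) h1 (by positivity)
      rwa [← Real.rpow_natCast a (k+1), ← Real.rpow_mul ha.le,
        show ((k+1:ℕ):ℝ) * ((1:ℝ)/c) = 1 by push_cast [hcdef]; field_simp,
        Real.rpow_one] at h3
    have hstep : meanFieldXJunta k n t ≤ n * Real.exp (1 - a) := by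
      rw [meanFieldXJunta]
      have := Real.exp_le_exp.mpr (by linarith : 1 - (1 + c * t) ^ ((1:ℝ)/c) ≤ 1 - a)
      exact mul_le_mul_of_nonneg_left this hn0.le
    have heq : n * Real.exp (1 - a) = n ^ ((1:ℝ) - ε) := by
      have h5 : (1:ℝ) - a = -(ε * Real.log n) := by rw [hadef]; ring
      rw [h5, show -(ε * Real.log n) = Real.log n * (-ε) by ring,
        ← Real.rpow_def_of_pos hn0,
        show (1:ℝ) - ε = 1 + (-ε) by ring, Real.rpow_add hn0, Real.rpow_one]
    linarith [hstep, heq.le]
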